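/- Let δ > 0 and let P(z) = ∑_{k≥0} a_k z^k and Q(z) = ∑_{k≥0} b_k z^k be holomorphic functions on the open set U_δ = ℂ ∖ {x ∈ ℝ : x ≤ −3δ/4}, with a_k = b_k for k = 0, …, N for some N ∈ ℕ. Then there exists a compact set S ⊂ U_δ, containing 0 and 1 and depending only on δ, such that, with r = 1 + √δ and M = sup_{z∈S} max(|P(z)|, |Q(z)|), one has |P(1) − Q(1)| ≤ 2M/((r−1)·r^N). -/

import Mathlib

open Filter Function Metric Set
open scoped Topology

/-- The slit domain `U_δ = ℂ ∖ {x ∈ ℝ : x ≤ −3δ/4}`. -/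
def slitDomain (δ : ℝ) : Set ℂ := ((fun x : ℝ => (x : ℂ)) '' Set.Iic (-(3 * δ / 4)))ᶜ

namespace BoundSlitPlaneAux

noncomputable def xi (δ : ℝ) : ℝ := 1 - Real.sqrt δ / Real.sqrt (1 + δ)

noncomputable def uu (δ : ℝ) (z : ℂ) : ℂ :=
  (δ : ℂ) * (xi δ : ℂ) * (2 - (xi δ : ℂ) * z) / (1 - (xi δ : ℂ) * z) ^ 2

noncomputable def hh (δ : ℝ) (z : ℂ) : ℂ := z * uu δ z

variable {δ : ℝ} {z : ℂ}

/-- Local factorization with vanishing leading coefficients. -/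
lemma eventually_factor {f : ℂ → ℂ} {p : FormalMultilinearSeries ℂ ℂ ℂ}
    (hp : HasFPowerSeriesAt f p 0) (n : ℕ) (hn : ∀ k < n, p.coeff k = 0) :
    ∃ g : ℂ → ℂ, AnalyticAt ℂ g 0 ∧ ∀ᶠ z in 𝓝 (0:ℂ), f z = z ^ n * g z := by
  refine ⟨(Function.swap dslope 0)^[n] f,
    (hp.has_fpower_series_iterate_dslope_fslope n).analyticAt, ?_⟩
  have hq := hasFPowerSeriesAt_iff'.mp (hp.has_fpower_series_iterate_dslope_fslope n)
  filter_upwards [hq, hasFPowerSeriesAt_iff'.mp hp] with x hx1 hx2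
  simp only [sub_zero] at hx1 hx2
  obtain ⟨s, hs1, hs2⟩ := HasSum.exists_hasSum_smul_of_apply_eq_zero hx2 hn
  simp only [FormalMultilinearSeries.coeff_iterate_fslope] at hx1
  rw [← hs1, hx1.unique hs2, smul_eq_mul]

lemma coeff_eq {f : ℂ → ℂ} {p : FormalMultilinearSeries ℂ ℂ ℂ}
    (hp : HasFPowerSeriesAt f p 0) (n : ℕ) :
    ((n.factorial :ℕ) : ℂ) * p.coeff n = iteratedDeriv n f 0 := by
  obtain ⟨r, hr⟩ := hp
  have := hr.factorial_smul (1 : ℂ) n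
  rw [iteratedDeriv_eq_iteratedFDeriv, ← this, FormalMultilinearSeries.coeff, nsmul_eq_mul]
  rfl

lemma sqrt_one_add_lt (hδ : 0 < δ) : Real.sqrt (1 + δ) < 1 + Real.sqrt δ := by
  have h1 : (Real.sqrt (1 + δ)) ^ 2 = 1 + δ := Real.sq_sqrt (by linarith)
  have h2 : (Real.sqrt δ) ^ 2 = δ := Real.sq_sqrt hδ.le
  have h3 : 0 < Real.sqrt δ := Real.sqrt_pos.mpr hδ
  have h4 : 0 ≤ 1 + Real.sqrt δ := by linarith
  refine lt_of_pow_lt_pow_left₀ 2 h4 ?_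
  rw [h1]; nlinarith

lemma sqrt_lt_sqrt_one_add (hδ : 0 < δ) : Real.sqrt δ < Real.sqrt (1 + δ) :=
  Real.sqrt_lt_sqrt hδ.le (by linarith)

lemma xi_pos (hδ : 0 < δ) : 0 < xi δ := by
  have := sqrt_lt_sqrt_one_add hδ
  have h0 : 0 < Real.sqrt (1 + δ) := Real.sqrt_pos.mpr (by linarith)
  have : Real.sqrt δ / Real.sqrt (1 + δ) < 1 := (div_lt_one h0).mpr this
  simp only [xi]; linarith

lemma xi_lt_one (hδ : 0 < δ) : xi δ < 1 := by
  have h0 : 0 < Real.sqrt (1 + δ) := Real.sqrt_pos.mpr (by linarith)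
  have : 0 < Real.sqrt δ / Real.sqrt (1 + δ) := div_pos (Real.sqrt_pos.mpr hδ) h0
  simp only [xi]; linarith

lemma key_lt (hδ : 0 < δ) : (1 + Real.sqrt δ) * xi δ < 1 := by
  set t := Real.sqrt δ
  set c := Real.sqrt (1 + δ)
  have h0 : 0 < c := Real.sqrt_pos.mpr (by linarith)
  have h1 : c < 1 + t := sqrt_one_add_lt hδ
  have h3 : 0 < t := Real.sqrt_pos.mpr hδ
  have hxi : xi δ = (c - t) / c := by
    show 1 - t / c = (c - t) / c
    rw [eq_div_iff h0.ne', sub_mul, div_mul_cancel₀ _ h0.ne', one_mul]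
  rw [hxi, ← mul_div_assoc, div_lt_one h0]
  nlinarith

lemma abs_xi_mul_lt (hδ : 0 < δ) (hz : ‖z‖ < (xi δ)⁻¹) :
    ‖(xi δ : ℂ) * z‖ < 1 := by
  rw [norm_mul, Complex.norm_real, Real.norm_eq_abs, abs_of_pos (xi_pos hδ)]
  calc xi δ * ‖z‖ < xi δ * (xi δ)⁻¹ :=
        mul_lt_mul_of_pos_left hz (xi_pos hδ)
    _ = 1 := mul_inv_cancel₀ (xi_pos hδ).ne'

lemma den_ne_zero (hδ : 0 < δ) (hz : ‖z‖ < (xi δ)⁻¹) :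
    (1 : ℂ) - (xi δ : ℂ) * z ≠ 0 := by
  have h := abs_xi_mul_lt hδ hz
  intro h0
  have : (xi δ : ℂ) * z = 1 := by linear_combination -h0
  rw [this] at h; simp at h

lemma den_lt_two (hδ : 0 < δ) (hz : ‖z‖ < (xi δ)⁻¹) :
    ‖1 - (xi δ : ℂ) * z‖ < 2 := by
  have h := abs_xi_mul_lt hδ hz
  calc ‖1 - (xi δ : ℂ) * z‖
      ≤ ‖(1 : ℂ)‖ + ‖(xi δ : ℂ) * z‖ := by
        simpa using norm_sub_le (1 : ℂ) ((xi δ : ℂ) * z)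
    _ < 2 := by simp at *; linarith

lemma hh_val (hden : (1 : ℂ) - (xi δ : ℂ) * z ≠ 0) :
    hh δ z = (δ : ℂ) / (1 - (xi δ : ℂ) * z) ^ 2 - δ := by
  rw [hh, uu, eq_sub_iff_add_eq, ← mul_div_assoc, div_add' _ _ _ (pow_ne_zero 2 hden),
    div_left_inj' (pow_ne_zero 2 hden)]
  ring

lemma hh_zero : hh δ 0 = 0 := by simp [hh]

lemma hh_one (hδ : 0 < δ) : hh δ 1 = 1 := by
  have h0 : (0:ℝ) < Real.sqrt (1 + δ) := Real.sqrt_pos.mpr (by linarith)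
  have ht2 : (Real.sqrt δ) ^ 2 = δ := Real.sq_sqrt hδ.le
  have hc2 : (Real.sqrt (1 + δ)) ^ 2 = 1 + δ := Real.sq_sqrt (by linarith)
  have hre : δ * (xi δ * (2 - xi δ)) = (1 - xi δ) ^ 2 := by
    have hxi : 1 - xi δ = Real.sqrt δ / Real.sqrt (1 + δ) := by simp [xi]
    have h2xi : 2 - xi δ = 1 + Real.sqrt δ / Real.sqrt (1 + δ) := by simp [xi]; ring
    have hxiv : xi δ = 1 - Real.sqrt δ / Real.sqrt (1 + δ) := rfl
    rw [h2xi, hxiv]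
    field_simp
    nlinarith
  have hden : (1 : ℂ) - (xi δ : ℂ) ≠ 0 := by
    have h1 : xi δ ≠ 1 := (xi_lt_one hδ).ne
    intro hc
    have h2 : ((xi δ : ℂ)) = 1 := by linear_combination -hc
    have h3 : xi δ = 1 := by exact_mod_cast h2
    exact h1 h3
  rw [hh, uu, one_mul, mul_one]
  rw [div_eq_one_iff_eq (pow_ne_zero 2 hden)]
  have := congrArg (Complex.ofReal) hre
  push_cast at this
  linear_combination this

lemma hh_mem (hδ : 0 < δ) (hz : ‖z‖ < (xi δ)⁻¹) :
    hh δ z ∈ slitDomain δ := by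
  have hden := den_ne_zero hδ hz
  have habs2 := den_lt_two hδ hz
  set s : ℂ := 1 - (xi δ : ℂ) * z with hs
  set w : ℂ := s ^ 2 with hw
  have hw0 : w ≠ 0 := pow_ne_zero 2 hden
  have hval : hh δ z = (δ : ℂ) / w - δ := hh_val hden
  simp only [slitDomain, Set.mem_compl_iff, Set.mem_image]
  intro hcon
  obtain ⟨x, hx, hxe⟩ := hcon
  rw [Set.mem_Iic] at hx
  by_cases him : w.im = 0
  · -- w is a positive real < 4
    have hwim : w.im = 2 * (s.re * s.im) := by
      simp [hw, pow_two, Complex.mul_im]; try ring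
    have hwre : w.re = s.re ^ 2 - s.im ^ 2 := by
      simp [hw, pow_two, Complex.mul_re]; try ring
    have hsre : s.re ≠ 0 := by
      intro h0
      have h1 : ((xi δ : ℂ) * z).re = 1 := by
        have he : ((xi δ : ℂ) * z) = 1 - s := by rw [hs]; ring
        rw [he]; simp [h0]
      have h2 := Complex.abs_re_le_norm ((xi δ : ℂ) * z)
      have h3 := abs_xi_mul_lt hδ hz
      rw [h1] at h2
      rw [norm_mul, Complex.norm_real, Real.norm_eq_abs] at h3
      simp at h2
      linarith
    have hsim : s.im = 0 := by
      rcases mul_eq_zero.mp (by linarith [hwim] : s.re * s.im = 0) with h | h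
      · exact absurd h hsre
      · exact h
    have hwpos : 0 < w.re := by
      rw [hwre, hsim]
      simpa using pow_two_pos_of_ne_zero hsre
    have hwlt4 : w.re < 4 := by
      have h1 : w.re ≤ ‖w‖ := Complex.re_le_norm w
      have h2 : ‖w‖ = ‖s‖ ^ 2 := by rw [hw, norm_pow]
      nlinarith [norm_nonneg s]
    have hx' : x = δ / w.re - δ := by
      have h1 : x = (hh δ z).re := by rw [← hxe]; simp
      rw [hval] at h1
      have h2 : ((δ : ℂ) / w).re = δ / w.re := by
        rw [Complex.div_re, Complex.normSq_apply, him]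
        simp only [Complex.ofReal_re, Complex.ofReal_im, zero_mul, add_zero, mul_zero]
        rw [mul_div_mul_right _ _ hwpos.ne']
        simp
      rw [Complex.sub_re, h2] at h1
      simpa using h1
    have : δ / 4 < δ / w.re := div_lt_div_of_pos_left hδ hwpos hwlt4
    linarith
  · -- imaginary part nonzero
    have h1 : (hh δ z).im = 0 := by rw [← hxe]; simp
    rw [hval] at h1
    have h2 : ((δ : ℂ) / w).im = 0 := by
      have : ((δ : ℂ) / w - (δ:ℂ)).im = ((δ : ℂ)/w).im := by simp
      rw [← this, h1]
    rw [Complex.div_im] at h2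
    simp only [Complex.ofReal_im, Complex.ofReal_re, zero_mul, zero_div, zero_sub,
      neg_div, neg_eq_zero] at h2
    have hns : Complex.normSq w ≠ 0 := by simpa [Complex.normSq_eq_zero] using hw0
    rcases div_eq_zero_iff.mp h2 with h | h
    · rcases mul_eq_zero.mp h with h' | h'
      · exact hδ.ne' h'
      · exact him h'
    · exact hns h

lemma hh_diffAt (hδ : 0 < δ) (hz : ‖z‖ < (xi δ)⁻¹) :
    DifferentiableAt ℂ (hh δ) z := by
  have hden := den_ne_zero hδ hz
  apply DifferentiableAt.mul differentiableAt_id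
  apply DifferentiableAt.div
  · fun_prop
  · fun_prop
  · exact pow_ne_zero 2 hden

end BoundSlitPlaneAux

open BoundSlitPlaneAux in
/-- Let `δ > 0` and let `P, Q` be holomorphic on
`U_δ = ℂ ∖ {x ∈ ℝ : x ≤ −3δ/4}` with equal Taylor coefficients at `0` up to order `N`.
Then there is a compact set `S ⊆ U_δ` containing `0` and `1` such that, with
`r = 1 + √δ` and `M = sup_{z ∈ S} max(|P(z)|, |Q(z)|)`, one has
`|P(1) − Q(1)| ≤ 2M/((r−1)·r^N)`. -/
theorem bound_slit_plane (δ : ℝ) (hδ : 0 < δ) (P Q : ℂ → ℂ)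
    (hP : DifferentiableOn ℂ P (slitDomain δ))
    (hQ : DifferentiableOn ℂ Q (slitDomain δ))
    (N : ℕ) (hcoef : ∀ k ≤ N, iteratedDeriv k P 0 = iteratedDeriv k Q 0) :
    ∃ S : Set ℂ, IsCompact S ∧ S ⊆ slitDomain δ ∧ (0 : ℂ) ∈ S ∧ (1 : ℂ) ∈ S ∧
      (let r : ℝ := 1 + Real.sqrt δ
       let M : ℝ := sSup ((fun z => max (‖P z‖) (‖Q z‖)) '' S)
       ‖P 1 - Q 1‖ ≤ 2 * M / ((r - 1) * r ^ N)) := by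
  classical
  set t := Real.sqrt δ with htdef
  have ht0 : 0 < t := Real.sqrt_pos.mpr hδ
  set ρ : ℝ := (xi δ)⁻¹ with hρdef
  have hξ0 := xi_pos hδ
  have hρ0 : 0 < ρ := inv_pos.mpr hξ0
  have hrρ : 1 + t < ρ := by
    calc 1 + t = ((1 + t) * xi δ) * ρ := by rw [hρdef]; field_simp
    _ < 1 * ρ := mul_lt_mul_of_pos_right (key_lt hδ) hρ0
    _ = ρ := one_mul ρ
  have hr1 : (1:ℝ) < 1 + t := by linarith
  have hr0 : (0:ℝ) < 1 + t := by linarith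
  have hopen : IsOpen (slitDomain δ) :=
    ((Complex.isUniformEmbedding_ofReal.isClosedEmbedding.isClosedMap _ isClosed_Iic)).isOpen_compl
  have hballd : ∀ z : ℂ, ‖z‖ < ρ → DifferentiableAt ℂ (hh δ) z :=
    fun z hz => hh_diffAt hδ hz
  set S : Set ℂ := hh δ '' closedBall 0 (1 + t) with hSdef
  have hsubball : ∀ z ∈ closedBall (0:ℂ) (1 + t), ‖z‖ < ρ := by
    intro z hz
    rw [mem_closedBall, Complex.dist_eq, sub_zero] at hz
    linarith
  have hcont : ContinuousOn (hh δ) (closedBall 0 (1 + t)) :=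
    fun z hz => ((hballd z (hsubball z hz)).continuousAt).continuousWithinAt
  have hScomp : IsCompact S := (isCompact_closedBall _ _).image_of_continuousOn hcont
  have hSsub : S ⊆ slitDomain δ := by
    rintro _ ⟨z, hz, rfl⟩; exact hh_mem hδ (hsubball z hz)
  have h0S : (0:ℂ) ∈ S := ⟨0, mem_closedBall_self hr0.le, hh_zero⟩
  have h1S : (1:ℂ) ∈ S := by
    refine ⟨1, ?_, hh_one hδ⟩
    rw [mem_closedBall, Complex.dist_eq, sub_zero]
    simp only [norm_one]
    linarith
  refine ⟨S, hScomp, hSsub, h0S, h1S, ?_⟩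
  show ‖P 1 - Q 1‖ ≤
    2 * sSup ((fun z => max (‖P z‖) (‖Q z‖)) '' S) /
      ((1 + t - 1) * (1 + t) ^ N)
  set M := sSup ((fun z => max (‖P z‖) (‖Q z‖)) '' S) with hMdef
  have hcontPQ : ContinuousOn (fun z => max (‖P z‖) (‖Q z‖)) S :=
    continuous_max.comp_continuousOn (f := fun z => (‖P z‖, ‖Q z‖))
      ((continuous_norm.comp_continuousOn ((hP.continuousOn).mono hSsub)).prodMk
        (continuous_norm.comp_continuousOn ((hQ.continuousOn).mono hSsub)))
  have hbdd : BddAbove ((fun z => max (‖P z‖) (‖Q z‖)) '' S) :=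
    (hScomp.image_of_continuousOn hcontPQ).bddAbove
  have hMub : ∀ w ∈ S, max (‖P w‖) (‖Q w‖) ≤ M :=
    fun w hw => le_csSup hbdd ⟨w, hw, rfl⟩
  have hM0 : 0 ≤ M :=
    le_trans (le_trans (norm_nonneg _) (le_max_left _ _)) (hMub 1 h1S)
  have h0dom : (0:ℂ) ∈ slitDomain δ := by
    rw [← hh_zero (δ := δ)]
    exact hh_mem hδ (by simpa using hξ0)
  obtain ⟨pp, hpp⟩ := hP.analyticAt (hopen.mem_nhds h0dom)
  obtain ⟨qq, hqq⟩ := hQ.analyticAt (hopen.mem_nhds h0dom)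
  have hF : HasFPowerSeriesAt (fun z => P z - Q z) (pp - qq) 0 := hpp.sub hqq
  have hvan : ∀ k < N + 1, (pp - qq).coeff k = 0 := by
    intro k hk
    have h1 := coeff_eq hpp k
    have h2 := coeff_eq hqq k
    have h3 := hcoef k (Nat.lt_succ_iff.mp hk)
    have hfc : ((k.factorial : ℕ) : ℂ) ≠ 0 := Nat.cast_ne_zero.mpr k.factorial_ne_zero
    have h4 : (pp - qq).coeff k = pp.coeff k - qq.coeff k := rfl
    rw [h4, sub_eq_zero]
    apply mul_left_cancel₀ hfc
    rw [h1, h2, h3]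
  obtain ⟨G, hGa, hGev⟩ := eventually_factor hF (N + 1) hvan
  have hu0 : AnalyticAt ℂ (uu δ) 0 := by
    have : AnalyticAt ℂ
        (fun z : ℂ => (δ : ℂ) * (xi δ : ℂ) * (2 - (xi δ : ℂ) * z) / (1 - (xi δ : ℂ) * z) ^ 2) 0 := by
      apply AnalyticAt.div
      · exact (analyticAt_const.mul (analyticAt_const.sub (analyticAt_const.mul analyticAt_id)))
      · exact (analyticAt_const.sub (analyticAt_const.mul analyticAt_id)).pow 2
      · simp
    exact this
  have hh0a : AnalyticAt ℂ (hh δ) 0 := by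
    have : AnalyticAt ℂ (fun z : ℂ => z * uu δ z) 0 := analyticAt_id.mul hu0
    exact this
  have hGha : AnalyticAt ℂ (fun z => G (hh δ z)) 0 := by
    apply AnalyticAt.comp
    · rw [hh_zero]; exact hGa
    · exact hh0a
  set k₀ : ℂ → ℂ := fun z => uu δ z ^ (N+1) * G (hh δ z) with hk₀def
  have hk₀a : AnalyticAt ℂ k₀ 0 := (hu0.pow _).mul hGha
  set g : ℂ → ℂ := fun z => P (hh δ z) - Q (hh δ z) with hgdef
  have htends : Tendsto (hh δ) (𝓝 0) (𝓝 0) := by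
    have h1 := (hballd 0 (by simpa using hρ0)).continuousAt
    rw [ContinuousAt, hh_zero] at h1
    exact h1
  have hev3 : ∀ᶠ z in 𝓝 (0:ℂ), g z = z ^ (N+1) * k₀ z := by
    filter_upwards [htends.eventually hGev] with z hz
    have hz' : P (hh δ z) - Q (hh δ z) = (hh δ z) ^ (N+1) * G (hh δ z) := hz
    calc g z = (hh δ z) ^ (N+1) * G (hh δ z) := hz'
    _ = z ^ (N+1) * k₀ z := by
        simp only [hh, hk₀def]
        ring
  set kk : ℂ → ℂ := fun z => if z = 0 then k₀ 0 else g z / z ^ (N+1) with hkkdef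
  have hkk0 : kk =ᶠ[𝓝 (0:ℂ)] k₀ := by
    filter_upwards [hev3] with z hz
    by_cases h0 : z = 0
    · simp [hkkdef, h0]
    · simp only [hkkdef, if_neg h0]
      rw [hz, mul_comm, mul_div_assoc, div_self (pow_ne_zero _ h0), mul_one]
  have hgd : ∀ z : ℂ, ‖z‖ < ρ → DifferentiableAt ℂ g z := by
    intro z hz
    exact ((hP.differentiableAt (hopen.mem_nhds (hh_mem hδ hz))).comp z (hballd z hz)).sub
      ((hQ.differentiableAt (hopen.mem_nhds (hh_mem hδ hz))).comp z (hballd z hz))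
  have hkd : ∀ z : ℂ, ‖z‖ < ρ → DifferentiableAt ℂ kk z := by
    intro z hz
    by_cases h0 : z = 0
    · subst h0
      exact hk₀a.differentiableAt.congr_of_eventuallyEq hkk0
    · have hd : DifferentiableAt ℂ (fun w => g w / w ^ (N+1)) z :=
        (hgd z hz).div (differentiableAt_pow _) (pow_ne_zero _ h0)
      apply hd.congr_of_eventuallyEq
      filter_upwards [eventually_ne_nhds h0] with w hw
      simp [hkkdef, if_neg hw]
  have hfacz : ∀ z : ℂ, ‖z‖ < ρ → g z = z ^ (N+1) * kk z := by
    intro z hz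
    by_cases h0 : z = 0
    · subst h0
      have hPQ0 : P 0 = Q 0 := by simpa [iteratedDeriv_zero] using hcoef 0 (Nat.zero_le N)
      simp [hgdef, hkkdef, hh_zero, hPQ0, zero_pow (Nat.succ_ne_zero N)]
    · simp only [hkkdef, if_neg h0]
      rw [mul_comm, div_mul_cancel₀ _ (pow_ne_zero _ h0)]
  have hgleM : ∀ z ∈ closedBall (0:ℂ) (1+t), ‖g z‖ ≤ 2 * M := by
    intro z hz
    have hmem : hh δ z ∈ S := ⟨z, hz, rfl⟩
    have hle := hMub _ hmem
    have h1 : ‖P (hh δ z)‖ ≤ M := le_trans (le_max_left _ _) hle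
    have h2 : ‖Q (hh δ z)‖ ≤ M := le_trans (le_max_right _ _) hle
    calc ‖g z‖ ≤ ‖P (hh δ z)‖ + ‖Q (hh δ z)‖ :=
          norm_sub_le _ _
    _ ≤ 2 * M := by linarith
  have hDCC : DiffContOnCl ℂ kk (ball 0 (1+t)) := by
    constructor
    · intro z hz
      rw [mem_ball, Complex.dist_eq, sub_zero] at hz
      exact (hkd z (by linarith)).differentiableWithinAt
    · rw [closure_ball 0 hr0.ne']
      intro z hz
      rw [mem_closedBall, Complex.dist_eq, sub_zero] at hz
      exact (hkd z (by linarith)).continuousAt.continuousWithinAt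
  have hkb : ∀ z ∈ sphere (0:ℂ) (1+t), ‖kk z‖ ≤ 2 * M / (1+t) ^ (N+1) := by
    intro z hz
    rw [mem_sphere, Complex.dist_eq, sub_zero] at hz
    have hzρ : ‖z‖ < ρ := by rw [hz]; linarith
    have hfz := hfacz z hzρ
    have habs : ‖g z‖ = (1+t) ^ (N+1) * ‖kk z‖ := by
      rw [hfz, norm_mul, norm_pow, hz]
    rw [le_div_iff₀ (by positivity)]
    calc ‖kk z‖ * (1+t) ^ (N+1) = ‖g z‖ := by rw [habs]; ring
    _ ≤ 2 * M := hgleM z (by rw [mem_closedBall, Complex.dist_eq, sub_zero, hz])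
  have h1ball : (1:ℂ) ∈ ball (0:ℂ) (1+t) := by
    rw [mem_ball, Complex.dist_eq, sub_zero]
    simp only [norm_one]
    linarith
  have hk1 : ‖kk 1‖ ≤ 2 * M / (1+t) ^ (N+1) := by
    apply Complex.norm_le_of_forall_mem_frontier_norm_le isBounded_ball hDCC
    · rw [frontier_ball 0 hr0.ne']
      exact hkb
    · exact subset_closure h1ball
  have h1ρ : ‖(1 : ℂ)‖ < ρ := by
    simp only [norm_one]
    linarith
  have hg1 : g 1 = kk 1 := by rw [hfacz 1 h1ρ]; simp
  have hPQ1 : P 1 - Q 1 = g 1 := by simp [hgdef, hh_one hδ]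
  have hfinal : ‖P 1 - Q 1‖ ≤ 2 * M / (1+t) ^ (N+1) := by
    rw [hPQ1, hg1]
    exact hk1
  have hteq : 1 + t - 1 = t := by ring
  have hd1 : 0 < (1 + t - 1) * (1+t) ^ N := by
    rw [hteq]; positivity
  have hd2 : (1 + t - 1) * (1+t) ^ N ≤ (1+t) ^ (N+1) := by
    rw [hteq, pow_succ]
    have hpn : 0 ≤ (1+t) ^ N := pow_nonneg hr0.le N
    nlinarith
  calc ‖P 1 - Q 1‖ ≤ 2 * M / (1+t) ^ (N+1) := hfinal
  _ ≤ 2 * M / ((1 + t - 1) * (1+t) ^ N) :=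
      div_le_div_of_nonneg_left (by linarith) hd1 hd2
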